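/- Let λ > 0, r₀ > 0, n_L > 0, b⊥₁ > 0, b⊥₂ > 0 be real numbers, let θ₀ ∈ (0, π/2), let A ∈ (0,1), and let γ₁, γ₂ be real numbers with A ≤ γ_k < 1 for k = 1,2. For k = 1,2 define the per-pair height error σ_{h,k} = (λ r₀ sin θ₀ / b⊥_k) · (1/(2π γ_k)) · √((1 − γ_k²)/(2 n_L)) and the weight w_k = 1/σ_{h,k}². Then the fused height error σ_h = √((w₁² σ_{h,1}² + w₂² σ_{h,2}²)/(w₁ + w₂)²) satisfies σ_h ≤ √( λ² r₀² sin²θ₀ (1 − A²) / (8 π² A² n_L (b⊥₁² + b⊥₂²)) ). -/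

import Mathlib

open Real

lemma aux_ratio (A γ : ℝ) (hA : 0 < A) (hγ : A ≤ γ) :
    (1 - γ ^ 2) / γ ^ 2 ≤ (1 - A ^ 2) / A ^ 2 := by
  have hγ0 : 0 < γ := hA.trans_le hγ
  rw [div_le_div_iff₀ (by positivity) (by positivity)]
  nlinarith [mul_nonneg (sub_nonneg.2 hγ) (by linarith : (0:ℝ) ≤ γ + A)]

set_option maxHeartbeats 1600000 in
/-- Proposition 1: upper bound on the fused height error of a dual-baseline
InSAR system based on the worst-case coherence `A`. -/
theorem fused_height_error_upper_bound
    (lam r0 nL b1 b2 θ0 A γ1 γ2 σ1 σ2 w1 w2 σh : ℝ)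
    (hlam : 0 < lam) (hr0 : 0 < r0) (hnL : 0 < nL)
    (hb1 : 0 < b1) (hb2 : 0 < b2)
    (hθ0 : 0 < θ0 ∧ θ0 < π / 2)
    (hA : 0 < A ∧ A < 1)
    (hγ1 : A ≤ γ1 ∧ γ1 < 1) (hγ2 : A ≤ γ2 ∧ γ2 < 1)
    (hσ1 : σ1 = (lam * r0 * Real.sin θ0 / b1) * (1 / (2 * π * γ1)) *
      Real.sqrt ((1 - γ1 ^ 2) / (2 * nL)))
    (hσ2 : σ2 = (lam * r0 * Real.sin θ0 / b2) * (1 / (2 * π * γ2)) *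
      Real.sqrt ((1 - γ2 ^ 2) / (2 * nL)))
    (hw1 : w1 = 1 / σ1 ^ 2) (hw2 : w2 = 1 / σ2 ^ 2)
    (hσh : σh = Real.sqrt ((w1 ^ 2 * σ1 ^ 2 + w2 ^ 2 * σ2 ^ 2) / (w1 + w2) ^ 2)) :
    σh ≤ Real.sqrt (lam ^ 2 * r0 ^ 2 * Real.sin θ0 ^ 2 * (1 - A ^ 2) /
      (8 * π ^ 2 * A ^ 2 * nL * (b1 ^ 2 + b2 ^ 2))) := by
  obtain ⟨hθa, hθb⟩ := hθ0
  obtain ⟨hA0, hA1⟩ := hA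
  have hS : 0 < Real.sin θ0 := Real.sin_pos_of_pos_of_lt_pi hθa
    (hθb.trans_le (by linarith [Real.pi_pos]))
  have hπ : 0 < π := Real.pi_pos
  have hγ10 : 0 < γ1 := hA0.trans_le hγ1.1
  have hγ20 : 0 < γ2 := hA0.trans_le hγ2.1
  have h1g1 : 0 < 1 - γ1 ^ 2 := by nlinarith [hγ1.2]
  have h1g2 : 0 < 1 - γ2 ^ 2 := by nlinarith [hγ2.2]
  have h1A : 0 < 1 - A ^ 2 := by nlinarith
  have hσ1pos : 0 < σ1 := by rw [hσ1]; positivity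
  have hσ2pos : 0 < σ2 := by rw [hσ2]; positivity
  -- the worst-case per-look constant
  obtain ⟨B, hB⟩ : ∃ B : ℝ, B = lam ^ 2 * r0 ^ 2 * Real.sin θ0 ^ 2 * (1 - A ^ 2) /
      (8 * π ^ 2 * A ^ 2 * nL) := ⟨_, rfl⟩
  have hBpos : 0 < B := by rw [hB]; positivity
  -- squared errors
  have e1 : σ1 ^ 2 = (lam ^ 2 * r0 ^ 2 * Real.sin θ0 ^ 2 / (b1 ^ 2 * 8 * π ^ 2 * nL)) *
      ((1 - γ1 ^ 2) / γ1 ^ 2) := by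
    rw [hσ1, mul_pow, mul_pow, Real.sq_sqrt (by positivity)]
    field_simp; ring
  have e2 : σ2 ^ 2 = (lam ^ 2 * r0 ^ 2 * Real.sin θ0 ^ 2 / (b2 ^ 2 * 8 * π ^ 2 * nL)) *
      ((1 - γ2 ^ 2) / γ2 ^ 2) := by
    rw [hσ2, mul_pow, mul_pow, Real.sq_sqrt (by positivity)]
    field_simp; ring
  have hBb1 : B / b1 ^ 2 = (lam ^ 2 * r0 ^ 2 * Real.sin θ0 ^ 2 / (b1 ^ 2 * 8 * π ^ 2 * nL)) *
      ((1 - A ^ 2) / A ^ 2) := by rw [hB]; field_simp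
  have hBb2 : B / b2 ^ 2 = (lam ^ 2 * r0 ^ 2 * Real.sin θ0 ^ 2 / (b2 ^ 2 * 8 * π ^ 2 * nL)) *
      ((1 - A ^ 2) / A ^ 2) := by rw [hB]; field_simp
  have hle1 : σ1 ^ 2 ≤ B / b1 ^ 2 := by
    rw [e1, hBb1]
    exact mul_le_mul_of_nonneg_left (aux_ratio A γ1 hA0 hγ1.1) (by positivity)
  have hle2 : σ2 ^ 2 ≤ B / b2 ^ 2 := by
    rw [e2, hBb2]
    exact mul_le_mul_of_nonneg_left (aux_ratio A γ2 hA0 hγ2.1) (by positivity)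
  -- weight lower bounds
  have hw1ge : b1 ^ 2 / B ≤ w1 := by
    rw [hw1]
    rw [div_le_div_iff₀ hBpos (by positivity)]
    calc b1 ^ 2 * σ1 ^ 2 ≤ b1 ^ 2 * (B / b1 ^ 2) :=
          mul_le_mul_of_nonneg_left hle1 (by positivity)
      _ = 1 * B := by field_simp
  have hw2ge : b2 ^ 2 / B ≤ w2 := by
    rw [hw2]
    rw [div_le_div_iff₀ hBpos (by positivity)]
    calc b2 ^ 2 * σ2 ^ 2 ≤ b2 ^ 2 * (B / b2 ^ 2) :=
          mul_le_mul_of_nonneg_left hle2 (by positivity)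
      _ = 1 * B := by field_simp
  have hw1pos : 0 < w1 := lt_of_lt_of_le (by positivity) hw1ge
  have hw2pos : 0 < w2 := lt_of_lt_of_le (by positivity) hw2ge
  have hwsum : 0 < w1 + w2 := by linarith
  -- σh simplifies to √(1/(w1+w2))
  have hnum : w1 ^ 2 * σ1 ^ 2 + w2 ^ 2 * σ2 ^ 2 = w1 + w2 := by
    rw [hw1, hw2]; field_simp
  have hσh' : σh = Real.sqrt (1 / (w1 + w2)) := by
    rw [hσh, hnum]
    congr 1
    field_simp
  rw [hσh']
  apply Real.sqrt_le_sqrt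
  have hsum : (b1 ^ 2 + b2 ^ 2) / B ≤ w1 + w2 := by
    have := add_le_add hw1ge hw2ge
    linarith [this, (add_div (b1^2) (b2^2) B).symm ▸ this]
  have hrhs : lam ^ 2 * r0 ^ 2 * Real.sin θ0 ^ 2 * (1 - A ^ 2) /
      (8 * π ^ 2 * A ^ 2 * nL * (b1 ^ 2 + b2 ^ 2)) = B / (b1 ^ 2 + b2 ^ 2) := by
    rw [hB]; field_simp
  rw [hrhs]
  rw [div_le_div_iff₀ hwsum (by positivity)]
  rw [div_le_iff₀ hBpos] at hsum
  calc 1 * (b1 ^ 2 + b2 ^ 2) = b1 ^ 2 + b2 ^ 2 := one_mul _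
    _ ≤ (w1 + w2) * B := hsum
    _ = B * (w1 + w2) := mul_comm _ _
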